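/- Let f : ℝⁿ × ℝ → ℝⁿ be continuously differentiable with forward-complete flow, and suppose there exist a symmetric positive-definite matrix M and λ > 0 such that J(x,t)^T M + M J(x,t) ≤ −2λM for all x and t ≥ t₀, where J(x,t) = ∂f/∂x. Then for any two solutions x(t), y(t) of ẋ = f(x,t), the M-weighted distance satisfies ((x(t)−y(t))^T M (x(t)−y(t)))^{1/2} ≤ ((x₀−y₀)^T M (x₀−y₀))^{1/2}·e^{−λ(t−t₀)} for all t ≥ t₀. -/

import Mathlib

open Matrix

private lemma hasDerivAt_quad {n : ℕ} (M : Matrix (Fin n) (Fin n) ℝ)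
    (v : ℝ → Fin n → ℝ) (v' : Fin n → ℝ) (t : ℝ) (hv : HasDerivAt v v' t) :
    HasDerivAt (fun s => v s ⬝ᵥ (M *ᵥ v s))
      (v' ⬝ᵥ (M *ᵥ v t) + v t ⬝ᵥ (M *ᵥ v')) t := by
  have hcomp : ∀ i, HasDerivAt (fun s => v s i) (v' i) t := hasDerivAt_pi.mp hv
  have hinner : ∀ i, HasDerivAt (fun s => ∑ j, M i j * v s j) (∑ j, M i j * v' j) t :=
    fun i => HasDerivAt.fun_sum fun j _ => (hcomp j).const_mul (M i j)
  have h : HasDerivAt (fun s => ∑ i, v s i * ∑ j, M i j * v s j)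
      (∑ i, (v' i * ∑ j, M i j * v t j + v t i * ∑ j, M i j * v' j)) t :=
    HasDerivAt.fun_sum fun i _ => (hcomp i).mul (hinner i)
  have e1 : (fun s => v s ⬝ᵥ (M *ᵥ v s)) = fun s => ∑ i, v s i * ∑ j, M i j * v s j := by
    funext s; simp [dotProduct, Matrix.mulVec]
  have e2 : v' ⬝ᵥ (M *ᵥ v t) + v t ⬝ᵥ (M *ᵥ v') =
      ∑ i, (v' i * ∑ j, M i j * v t j + v t i * ∑ j, M i j * v' j) := by
    simp [dotProduct, Matrix.mulVec, Finset.sum_add_distrib]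
  rw [e1, e2]
  exact h

theorem stmt12 (n : ℕ) (f : (Fin n → ℝ) → ℝ → Fin n → ℝ)
    (J : (Fin n → ℝ) → ℝ → Matrix (Fin n) (Fin n) ℝ)
    (hf : ContDiff ℝ 1 (fun p : (Fin n → ℝ) × ℝ => f p.1 p.2))
    (hJ : ∀ x t, HasFDerivAt (fun y => f y t)
        (LinearMap.toContinuousLinearMap (Matrix.mulVecLin (J x t))) x)
    (M : Matrix (Fin n) (Fin n) ℝ) (hMpd : M.PosDef) (hMs : M.IsSymm)
    (lam t₀ : ℝ) (hlam : 0 < lam)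
    (hcontr : ∀ x t, t₀ ≤ t → ∀ v : Fin n → ℝ,
        v ⬝ᵥ (((J x t)ᵀ * M + M * J x t) *ᵥ v) ≤ -2 * lam * (v ⬝ᵥ (M *ᵥ v)))
    (x y : ℝ → Fin n → ℝ)
    (hx : ∀ t, t₀ ≤ t → HasDerivAt x (f (x t) t) t)
    (hy : ∀ t, t₀ ≤ t → HasDerivAt y (f (y t) t) t) :
    ∀ t, t₀ ≤ t →
      Real.sqrt ((x t - y t) ⬝ᵥ (M *ᵥ (x t - y t))) ≤
        Real.sqrt ((x t₀ - y t₀) ⬝ᵥ (M *ᵥ (x t₀ - y t₀))) * Real.exp (-lam * (t - t₀)) := by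
  have hsymm : ∀ a b : Fin n → ℝ, a ⬝ᵥ (M *ᵥ b) = b ⬝ᵥ (M *ᵥ a) := by
    intro a b
    rw [Matrix.dotProduct_mulVec, dotProduct_comm b, ← Matrix.vecMul_transpose, hMs]
  -- pointwise quadratic bound
  have key : ∀ z (t : ℝ), t₀ ≤ t → ∀ v : Fin n → ℝ,
      v ⬝ᵥ (M *ᵥ (J z t *ᵥ v)) ≤ -lam * (v ⬝ᵥ (M *ᵥ v)) := by
    intro z t ht v
    have h := hcontr z t ht v
    have e : v ⬝ᵥ (((J z t)ᵀ * M + M * J z t) *ᵥ v) = 2 * (v ⬝ᵥ (M *ᵥ (J z t *ᵥ v))) := by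
      rw [Matrix.add_mulVec, dotProduct_add, ← Matrix.mulVec_mulVec, ← Matrix.mulVec_mulVec]
      have h1 : v ⬝ᵥ ((J z t)ᵀ *ᵥ (M *ᵥ v)) = (J z t *ᵥ v) ⬝ᵥ (M *ᵥ v) := by
        rw [Matrix.dotProduct_mulVec, Matrix.vecMul_transpose]
      have h2 : v ⬝ᵥ (M *ᵥ (J z t *ᵥ v)) = (M *ᵥ v) ⬝ᵥ (J z t *ᵥ v) := by
        rw [hsymm v, dotProduct_comm]
      rw [h1, h2, dotProduct_comm (M *ᵥ v)]
      ring
    rw [e] at h; linarith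
  -- mean value inequality
  have mv : ∀ t, t₀ ≤ t →
      (x t - y t) ⬝ᵥ (M *ᵥ (f (x t) t - f (y t) t)) ≤
        -lam * ((x t - y t) ⬝ᵥ (M *ᵥ (x t - y t))) := by
    intro t ht
    set v := x t - y t with hv
    set c := v ⬝ᵥ (M *ᵥ v) with hc
    set h : ℝ → ℝ := fun s => v ⬝ᵥ (M *ᵥ f (y t + s • v) t) with hdef
    have hder : ∀ s : ℝ, HasDerivAt h (v ⬝ᵥ (M *ᵥ (J (y t + s • v) t *ᵥ v))) s := by
      intro s
      have hγ : HasDerivAt (fun s : ℝ => y t + s • v) v s := by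
        simpa using ((hasDerivAt_id s).smul_const v).const_add (y t)
      have hF : HasDerivAt (fun s : ℝ => f (y t + s • v) t) (J (y t + s • v) t *ᵥ v) s := by
        have := (hJ (y t + s • v) t).comp_hasDerivAt s hγ
        simpa [Function.comp_def] using this
      have hcomp : ∀ j, HasDerivAt (fun s : ℝ => f (y t + s • v) t j)
          ((J (y t + s • v) t *ᵥ v) j) s := hasDerivAt_pi.mp hF
      have hsum : HasDerivAt (fun s => ∑ j, (v ᵥ* M) j * f (y t + s • v) t j)
          (∑ j, (v ᵥ* M) j * (J (y t + s • v) t *ᵥ v) j) s :=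
        HasDerivAt.fun_sum fun j _ => (hcomp j).const_mul _
      have e1 : h = fun s => ∑ j, (v ᵥ* M) j * f (y t + s • v) t j := by
        funext s; simp only [hdef, Matrix.dotProduct_mulVec]; rfl
      have e2 : v ⬝ᵥ (M *ᵥ (J (y t + s • v) t *ᵥ v)) =
          ∑ j, (v ᵥ* M) j * (J (y t + s • v) t *ᵥ v) j := by
        rw [Matrix.dotProduct_mulVec]; rfl
      rw [e1, e2]; exact hsum
    have hkder : ∀ s : ℝ, HasDerivAt (fun s => h s + lam * c * s)
        (v ⬝ᵥ (M *ᵥ (J (y t + s • v) t *ᵥ v)) + lam * c) s := by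
      intro s
      change HasDerivAt (h + fun s => lam * c * s) _ s
      simpa using (hder s).add ((hasDerivAt_id s).const_mul (lam * c))
    have hk : Antitone (fun s => h s + lam * c * s) := by
      apply antitone_of_deriv_nonpos
      · exact fun s => (hkder s).differentiableAt
      · intro s
        rw [(hkder s).deriv]
        have := key (y t + s • v) t ht v
        rw [← hc] at this
        linarith
    have h01 : h 1 + lam * c * 1 ≤ h 0 + lam * c * 0 := hk (by norm_num : (0:ℝ) ≤ 1)
    have e0 : h 0 = v ⬝ᵥ (M *ᵥ f (y t) t) := by simp [hdef]
    have e1 : h 1 = v ⬝ᵥ (M *ᵥ f (x t) t) := by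
      rw [hdef]; simp [hv]
    rw [e0, e1] at h01
    have : v ⬝ᵥ (M *ᵥ (f (x t) t - f (y t) t)) =
        v ⬝ᵥ (M *ᵥ f (x t) t) - v ⬝ᵥ (M *ᵥ f (y t) t) := by
      rw [Matrix.mulVec_sub, dotProduct_sub]
    rw [this]
    linarith
  -- Grönwall via antitone auxiliary function
  intro T hT
  set V : ℝ → ℝ := fun t => (x t - y t) ⬝ᵥ (M *ᵥ (x t - y t)) with hVdef
  have hVder : ∀ t, t₀ ≤ t → HasDerivAt V
      (2 * ((x t - y t) ⬝ᵥ (M *ᵥ (f (x t) t - f (y t) t)))) t := by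
    intro t ht
    have hv : HasDerivAt (fun t => x t - y t) (f (x t) t - f (y t) t) t :=
      (hx t ht).sub (hy t ht)
    have := hasDerivAt_quad M (fun t => x t - y t) (f (x t) t - f (y t) t) t hv
    have esym : (f (x t) t - f (y t) t) ⬝ᵥ (M *ᵥ (x t - y t)) =
        (x t - y t) ⬝ᵥ (M *ᵥ (f (x t) t - f (y t) t)) := hsymm _ _
    rw [esym] at this
    convert this using 1
    ring
  set g : ℝ → ℝ := fun t => V t * Real.exp (2 * lam * (t - t₀)) with hgdef
  have hexp : ∀ t : ℝ, HasDerivAt (fun t => Real.exp (2 * lam * (t - t₀)))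
      (2 * lam * Real.exp (2 * lam * (t - t₀))) t := by
    intro t
    have h1 : HasDerivAt (fun t : ℝ => 2 * lam * (t - t₀)) (2 * lam) t := by
      simpa using (((hasDerivAt_id t).sub_const t₀).const_mul (2 * lam))
    have := (Real.hasDerivAt_exp (2 * lam * (t - t₀))).comp t h1
    simpa [mul_comm, Function.comp_def] using this
  have hgder : ∀ t, t₀ ≤ t → HasDerivAt g
      ((2 * ((x t - y t) ⬝ᵥ (M *ᵥ (f (x t) t - f (y t) t))) + 2 * lam * V t) *
        Real.exp (2 * lam * (t - t₀))) t := by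
    intro t ht
    have := (hVder t ht).mul (hexp t)
    change HasDerivAt (V * fun t => Real.exp (2 * lam * (t - t₀))) _ t
    exact this.congr_deriv (by ring)
  have hanti : AntitoneOn g (Set.Ici t₀) := by
    apply antitoneOn_of_deriv_nonpos (convex_Ici t₀)
    · intro t ht
      exact ((hgder t ht).continuousAt).continuousWithinAt
    · intro t ht
      rw [interior_Ici] at ht
      exact ((hgder t (le_of_lt ht)).differentiableAt).differentiableWithinAt
    · intro t ht
      rw [interior_Ici] at ht
      rw [(hgder t (le_of_lt ht)).deriv]
      have h1 := mv t (le_of_lt ht)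
      have h2 : (0:ℝ) < Real.exp (2 * lam * (t - t₀)) := Real.exp_pos _
      have h3 : 2 * ((x t - y t) ⬝ᵥ (M *ᵥ (f (x t) t - f (y t) t))) + 2 * lam * V t ≤ 0 := by
        rw [hVdef]; dsimp only; nlinarith
      exact mul_nonpos_of_nonpos_of_nonneg h3 (le_of_lt h2)
  have hgle : g T ≤ g t₀ := hanti (Set.self_mem_Ici) hT hT
  have hg0 : g t₀ = V t₀ := by simp [hgdef]
  rw [hg0] at hgle
  have hE : (0:ℝ) < Real.exp (2 * lam * (T - t₀)) := Real.exp_pos _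
  have hVT : V T ≤ V t₀ * Real.exp (-(2 * lam * (T - t₀))) := by
    rw [Real.exp_neg, ← div_eq_mul_inv, le_div_iff₀ hE]
    exact hgle
  have hV0 : 0 ≤ V t₀ := by
    rcases eq_or_ne (x t₀ - y t₀) 0 with h | h
    · simp [hVdef, h]
    · have := hMpd.dotProduct_mulVec_pos h
      simpa [hVdef] using this.le
  calc Real.sqrt (V T) ≤ Real.sqrt (V t₀ * Real.exp (-(2 * lam * (T - t₀)))) :=
        Real.sqrt_le_sqrt hVT
    _ = Real.sqrt (V t₀) * Real.sqrt (Real.exp (-(2 * lam * (T - t₀)))) :=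
        Real.sqrt_mul hV0 _
    _ = Real.sqrt (V t₀) * Real.exp (-lam * (T - t₀)) := by
        congr 1
        have : Real.exp (-(2 * lam * (T - t₀))) = (Real.exp (-lam * (T - t₀)))^2 := by
          rw [sq, ← Real.exp_add]; ring_nf
        rw [this, Real.sqrt_sq (Real.exp_nonneg _)]
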